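/- The matrices A = E_{12} + E_{13} + E_{25} + E_{34} and B = E_{12} + E_{25} + E_{34} in M_5(F) are similar (conjugate by some invertible matrix) and lie in the same (B_5, B_5) double coset, but are not B_5-similar (not conjugate by any invertible upper triangular matrix). -/

import Mathlib

/-- A = E₁₂+E₁₃+E₂₅+E₃₄ and B = E₁₂+E₂₅+E₃₄ in M₅(F) are similar and
lie in the same (B₅,B₅) double coset, but are not B₅-similar. -/
theorem similar_same_coset_not_triangular_similar {F : Type*} [Field F]
    (A B : Matrix (Fin 5) (Fin 5) F)
    (hA : A = Matrix.single 0 1 1 + Matrix.single 0 2 1 +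
          Matrix.single 1 4 1 + Matrix.single 2 3 1)
    (hB : B = Matrix.single 0 1 1 + Matrix.single 1 4 1 +
          Matrix.single 2 3 1) :
    (∃ g : Matrix (Fin 5) (Fin 5) F, IsUnit g ∧ g * A * g⁻¹ = B) ∧
    (∃ P P' : Matrix (Fin 5) (Fin 5) F,
        (∀ i j : Fin 5, j < i → P i j = 0) ∧ IsUnit P ∧
        (∀ i j : Fin 5, j < i → P' i j = 0) ∧ IsUnit P' ∧ P * A * P' = B) ∧
    ¬ ∃ g : Matrix (Fin 5) (Fin 5) F,
        (∀ i j : Fin 5, j < i → g i j = 0) ∧ IsUnit g ∧ g * A * g⁻¹ = B := by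
  subst hA hB
  refine ⟨?_, ?_, ?_⟩
  · -- similar
    refine ⟨1 + Matrix.single 1 2 1 + Matrix.single 4 3 1, ?_, ?_⟩
    · refine (Matrix.isUnit_iff_isUnit_det _).mpr (Matrix.isUnit_det_of_right_inverse
        (B := 1 - Matrix.single 1 2 1 - Matrix.single 4 3 1) ?_)
      simp only [ne_eq, Fin.reduceEq, not_false_eq_true, add_mul, mul_add, sub_mul, mul_sub,
        one_mul, mul_one, zero_mul, mul_zero, smul_zero, add_zero, zero_add,
        Matrix.single_mul_single_same, Matrix.single_mul_single_of_ne]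
      abel
    · have hinv : (1 + Matrix.single 1 2 1 +
          Matrix.single 4 3 1 : Matrix (Fin 5) (Fin 5) F)⁻¹ =
          1 - Matrix.single 1 2 1 - Matrix.single 4 3 1 := by
        apply Matrix.inv_eq_right_inv
        simp only [ne_eq, Fin.reduceEq, not_false_eq_true, add_mul, mul_add, sub_mul, mul_sub,
          one_mul, mul_one, zero_mul, mul_zero, smul_zero, add_zero, zero_add,
          Matrix.single_mul_single_same, Matrix.single_mul_single_of_ne]
        abel
      rw [hinv]
      simp only [ne_eq, Fin.reduceEq, not_false_eq_true, add_mul, mul_add, sub_mul, mul_sub,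
        one_mul, mul_one, zero_mul, mul_zero, smul_zero, add_zero, zero_add,
        Matrix.single_mul_single_same, Matrix.single_mul_single_of_ne]
      abel
  · -- same double coset
    refine ⟨1, 1 - Matrix.single 1 2 1, ?_, isUnit_one, ?_, ?_, ?_⟩
    · intro i j hij
      exact Matrix.one_apply_ne (ne_of_gt hij)
    · intro i j hij
      have h1 : ¬((1 : Fin 5) = i ∧ (2 : Fin 5) = j) := by
        rintro ⟨rfl, rfl⟩
        exact absurd hij (by decide)
      rw [Matrix.sub_apply, Matrix.one_apply_ne (ne_of_gt hij),
        Matrix.single_apply_of_ne (h := h1), sub_zero]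
    · refine (Matrix.isUnit_iff_isUnit_det _).mpr (Matrix.isUnit_det_of_right_inverse (B := 1 + Matrix.single 1 2 1) ?_)
      simp only [ne_eq, Fin.reduceEq, not_false_eq_true, add_mul, mul_add, sub_mul, mul_sub,
        one_mul, mul_one, zero_mul, mul_zero, smul_zero, add_zero, zero_add,
        Matrix.single_mul_single_same, Matrix.single_mul_single_of_ne]
      abel
    · simp only [ne_eq, Fin.reduceEq, not_false_eq_true, add_mul, mul_add, sub_mul, mul_sub,
        one_mul, mul_one, zero_mul, mul_zero, smul_zero, add_zero, zero_add,
        Matrix.single_mul_single_same, Matrix.single_mul_single_of_ne]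
      abel
  · -- not B₅-similar
    rintro ⟨g, htri, hu, hconj⟩
    have hdet : IsUnit g.det := (Matrix.isUnit_iff_isUnit_det g).mp hu
    have hge : g * (Matrix.single 0 1 1 + Matrix.single 0 2 1 +
          Matrix.single 1 4 1 + Matrix.single 2 3 1) =
        (Matrix.single 0 1 1 + Matrix.single 1 4 1 +
          Matrix.single 2 3 1) * g := by
      calc g * _ = g * _ * (g⁻¹ * g) := by
            rw [Matrix.nonsing_inv_mul g hdet, mul_one]
        _ = _ := by rw [← mul_assoc, hconj]
    have h1 : g 1 2 = g 0 0 := by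
      have := congrFun (congrFun hge 0) 2
      simpa [Matrix.mul_apply, Fin.sum_univ_five, eq_comm] using this
    have h2 : g 1 2 = g 4 3 := by
      have := congrFun (congrFun hge 1) 3
      simpa [Matrix.mul_apply, Fin.sum_univ_five, eq_comm] using this
    have h3 : g 4 3 = 0 := htri 4 3 (by decide)
    have hbt : g.BlockTriangular id := fun i j hij => htri i j hij
    have hdetprod : g.det = ∏ i, g i i := Matrix.det_of_upperTriangular hbt
    have h00 : g 0 0 ≠ 0 := by
      intro h0
      apply hdet.ne_zero
      rw [hdetprod, Fin.prod_univ_five, h0]; ring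
    exact h00 (by rw [← h1, h2, h3])
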